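/- arXiv:1904.13176 — 2 statements merged into one kernel-verified Lean document; each statement's English description precedes it below -/
import Mathlib

section
/- Let $c$ and $\eta$ be positive reals with $\eta \geq 1$, let $x \in (0,1)$, and assume $c > 3/2$ or $\eta > \sqrt{x}$. Then, with $X := (x+\eta)/(1+\eta)$, the double series identity $\sum_{k\geq 0} \left(\frac{1-x}{1+\eta}\right)^k {}_2F_1\!\left(\frac{k+1}{2}, \frac{k}{2}+1; c; x\right) = \frac{1}{X}\, {}_2F_1\!\left(\frac{1}{2}, 1; c; \frac{x}{X^2}\right)$ holds, where all series involved converge absolutely. -/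
open Real

noncomputable def poch (a : ℝ) (n : ℕ) : ℝ := (ascPochhammer ℝ n).eval a

/-- The Gauss hypergeometric series `₂F₁(a,b;c;x)`. -/
noncomputable def hyp2F1 (a b c x : ℝ) : ℝ :=
  ∑' n : ℕ, poch a n * poch b n / (poch c n * (n.factorial : ℝ)) * x ^ n

lemma poch_zero (a : ℝ) : poch a 0 = 1 := by simp [poch]

lemma poch_succ (a : ℝ) (n : ℕ) : poch a (n+1) = poch a n * (a + n) := by
  simp [poch, ascPochhammer_succ_eval]

lemma poch_pos {a : ℝ} (ha : 0 < a) (n : ℕ) : 0 < poch a n := by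
  induction n with
  | zero => simp [poch_zero]
  | succ n ih =>
    rw [poch_succ]
    have : (0:ℝ) < a + n := by positivity
    exact mul_pos ih this

lemma poch_nat_fac (k m : ℕ) :
    (k.factorial : ℝ) * poch ((k:ℝ)+1) m = ((k+m).factorial : ℝ) := by
  induction m with
  | zero => simp [poch_zero]
  | succ m ih =>
    rw [poch_succ, ← mul_assoc, ih, show k + (m+1) = (k+m)+1 by ring, Nat.factorial_succ]
    push_cast
    ring

lemma poch_dup (a : ℝ) (n : ℕ) :
    poch a n * poch (a + 1/2) n * 4^n = poch (2*a) (2*n) := by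
  induction n with
  | zero => simp [poch_zero]
  | succ n ih =>
    rw [show 2*(n+1) = (2*n+1)+1 by ring, poch_succ, poch_succ, poch_succ, poch_succ, pow_succ]
    push_cast
    linear_combination (4*(a+(n:ℝ))*(a+1/2+(n:ℝ))) * ih

lemma poch_one (n : ℕ) : poch 1 n = (n.factorial : ℝ) := by
  have h := poch_nat_fac 0 n
  simp only [Nat.factorial_zero, Nat.cast_one, one_mul, Nat.cast_zero, zero_add] at h
  simpa using h

lemma poch_key (k n : ℕ) :
    poch (((k:ℝ)+1)/2) n * poch ((k:ℝ)/2+1) n * (k.factorial : ℝ)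
      = poch (1/2) n * poch (2*(n:ℝ)+1) k * (n.factorial : ℝ) := by
  have h4 : (4:ℝ)^n ≠ 0 := by positivity
  have dup1 := poch_dup (((k:ℝ)+1)/2) n
  rw [show ((k:ℝ)+1)/2 + 1/2 = (k:ℝ)/2+1 by ring, show 2*(((k:ℝ)+1)/2) = (k:ℝ)+1 by ring] at dup1
  have dup2 := poch_dup (1/2 : ℝ) n
  rw [show (1:ℝ)/2 + 1/2 = 1 by ring, show 2*((1:ℝ)/2) = 1 by ring] at dup2
  have fac1 := poch_nat_fac k (2*n)
  have fac2 := poch_nat_fac (2*n) k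
  push_cast at fac2
  have hmain : poch (((k:ℝ)+1)/2) n * poch ((k:ℝ)/2+1) n * (k.factorial : ℝ) * 4^n
      = poch (1/2) n * poch (2*(n:ℝ)+1) k * (n.factorial : ℝ) * 4^n := by
    have e1 : poch (((k:ℝ)+1)/2) n * poch ((k:ℝ)/2+1) n * (k.factorial : ℝ) * 4^n
        = ((k+2*n).factorial : ℝ) := by
      rw [← fac1]; linear_combination (k.factorial : ℝ) * dup1
    have e2 : poch (1/2) n * poch (2*(n:ℝ)+1) k * (n.factorial : ℝ) * 4^n
        = ((2*n+k).factorial : ℝ) := by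
      have dup2' : poch (1/2 : ℝ) n * (n.factorial:ℝ) * 4^n = (((2*n).factorial : ℕ) : ℝ) := by
        rw [← poch_one n, ← poch_one (2*n)]; exact dup2
      rw [← fac2, ← dup2']; ring
    rw [e1, e2, show k + 2*n = 2*n+k by ring]
  exact mul_right_cancel₀ h4 hmain

lemma poch_div_fac (n k : ℕ) :
    poch (2*(n:ℝ)+1) k / (k.factorial : ℝ) = (((k + 2*n).choose (2*n) : ℕ) : ℝ) := by
  have fac2 := poch_nat_fac (2*n) k
  push_cast at fac2
  have hch := Nat.add_choose_mul_factorial_mul_factorial k (2*n)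
  have hchR : (((k + 2*n).choose (2*n) : ℕ) : ℝ) * (k.factorial : ℝ) * (((2*n).factorial : ℕ) : ℝ)
      = (((k + 2*n).factorial : ℕ) : ℝ) := by exact_mod_cast congrArg (Nat.cast (R := ℝ)) hch
  have hkf : ((k.factorial : ℕ) : ℝ) ≠ 0 := Nat.cast_ne_zero.mpr k.factorial_ne_zero
  have h2nf : (((2*n).factorial : ℕ) : ℝ) ≠ 0 := Nat.cast_ne_zero.mpr (2*n).factorial_ne_zero
  rw [div_eq_iff hkf]
  apply mul_left_cancel₀ h2nf
  rw [fac2, show 2*n+k = k+2*n by omega]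
  linarith [hchR]

lemma summable_ratio {c y : ℝ} (hc : 0 < c) (hy0 : 0 ≤ y) (hy1 : y < 1) :
    Summable fun n : ℕ => poch (1/2) n / poch c n * y ^ n := by
  set r : ℝ := (1+y)/2 with hr
  have hry : y < r := by rw [hr]; linarith
  have hr1 : r < 1 := by rw [hr]; linarith
  obtain ⟨N, hN⟩ := exists_nat_ge ((y/2 - r*c)/(r - y))
  apply summable_of_ratio_norm_eventually_le hr1
  filter_upwards [Filter.eventually_ge_atTop N] with n hn
  have hvpos : ∀ m : ℕ, 0 ≤ poch (1/2 : ℝ) m / poch c m * y ^ m := fun m =>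
    mul_nonneg (div_pos (poch_pos one_half_pos m) (poch_pos hc m)).le (pow_nonneg hy0 m)
  have hcn : (0:ℝ) < c + n := by positivity
  have hPc := (poch_pos hc n).ne'
  have hPc1 := (poch_pos hc (n+1)).ne'
  have key : poch (1/2:ℝ) (n+1) / poch c (n+1) * y^(n+1)
      = (poch (1/2:ℝ) n / poch c n * y^n) * ((1/2+n)*y/(c+n)) := by
    rw [poch_succ, poch_succ, pow_succ]
    field_simp
  have hq : (1/2+(n:ℝ))*y/(c+n) ≤ r := by
    rw [div_le_iff₀ hcn]
    have hn' : ((y/2 - r*c)/(r - y)) ≤ (n:ℝ) := le_trans hN (by exact_mod_cast hn)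
    have := (div_le_iff₀ (by linarith : (0:ℝ) < r - y)).mp hn'
    nlinarith
  rw [Real.norm_eq_abs, Real.norm_eq_abs, abs_of_nonneg (hvpos _), abs_of_nonneg (hvpos _), key]
  have h2 := mul_le_mul_of_nonneg_left hq (hvpos n)
  linarith [h2]

/-- Theorem 1 of the paper on `(0,1)`: the weighted sum of hypergeometric functions
`S(η,c;x)` evaluates to `(1/X) ₂F₁(1/2,1;c;x/X²)` with `X = (x+η)/(1+η)`. -/
theorem weighted_hyp_sum (c η x : ℝ) (hc : 0 < c) (hη : 1 ≤ η) (hx0 : 0 < x) (hx1 : x < 1)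
    (hconv : 3 / 2 < c ∨ Real.sqrt x < η) :
    (∀ k : ℕ, Summable fun n : ℕ =>
        poch (((k : ℝ) + 1) / 2) n * poch ((k : ℝ) / 2 + 1) n /
          (poch c n * (n.factorial : ℝ)) * x ^ n) ∧
    (Summable fun k : ℕ =>
        ((1 - x) / (1 + η)) ^ k * hyp2F1 (((k : ℝ) + 1) / 2) ((k : ℝ) / 2 + 1) c x) ∧
    (∑' k : ℕ, ((1 - x) / (1 + η)) ^ k * hyp2F1 (((k : ℝ) + 1) / 2) ((k : ℝ) / 2 + 1) c x) =
      (1 + η) / (x + η) * hyp2F1 (1 / 2) 1 c (x / ((x + η) / (1 + η)) ^ 2) := by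
  have hη0 : (0:ℝ) < 1 + η := by linarith
  have hxη : (0:ℝ) < x + η := by linarith
  set t : ℝ := (1 - x) / (1 + η) with htdef
  set X : ℝ := (x + η) / (1 + η) with hXdef
  have ht0 : 0 < t := div_pos (by linarith) hη0
  have ht1 : t < 1 := (div_lt_one hη0).mpr (by linarith)
  have hX0 : 0 < X := div_pos hxη hη0
  have hXt : X = 1 - t := by rw [hXdef, htdef]; field_simp; ring
  have hX1 : x < X ^ 2 := by
    rw [hXdef, div_pow, lt_div_iff₀ (by positivity)]
    nlinarith [mul_pos (sub_pos.2 hx1) (show (0:ℝ) < η^2 - x by nlinarith)]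
  set y : ℝ := x / X ^ 2 with hydef
  have hy0 : 0 < y := div_pos hx0 (by positivity)
  have hy1 : y < 1 := (div_lt_one (by positivity)).mpr hX1
  -- the double-indexed family
  set F : ℕ × ℕ → ℝ := fun p =>
    poch (((p.1 : ℝ) + 1) / 2) p.2 * poch ((p.1 : ℝ) / 2 + 1) p.2 /
      (poch c p.2 * (p.2.factorial : ℝ)) * x ^ p.2 * t ^ p.1 with hFdef
  set G : ℕ → ℝ := fun n => poch (1/2) n / poch c n * x ^ n with hGdef
  set H : ℕ → ℕ → ℝ := fun n k => (((k + 2*n).choose (2*n) : ℕ) : ℝ) * t ^ k with hHdef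
  have hF0 : ∀ p, 0 ≤ F p := by
    intro p
    have h1 := poch_pos (show (0:ℝ) < ((p.1 : ℝ) + 1) / 2 by positivity) p.2
    have h2 := poch_pos (show (0:ℝ) < (p.1 : ℝ) / 2 + 1 by positivity) p.2
    have h3 := poch_pos hc p.2
    have h4 : (0:ℝ) < (p.2.factorial : ℝ) := by positivity
    have := ht0
    positivity
  have hFGH : ∀ k n : ℕ, F (k, n) = G n * H n k := by
    intro k n
    have hkey := poch_key k n
    have hch := poch_div_fac n k
    have hPc := (poch_pos hc n).ne'
    have hnf : ((n.factorial : ℕ) : ℝ) ≠ 0 := Nat.cast_ne_zero.mpr n.factorial_ne_zero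
    have hkf : ((k.factorial : ℕ) : ℝ) ≠ 0 := Nat.cast_ne_zero.mpr k.factorial_ne_zero
    have hA : poch (((k:ℝ)+1)/2) n * poch ((k:ℝ)/2+1) n / (poch c n * (n.factorial : ℝ))
        = poch (1/2) n / poch c n * (poch (2*(n:ℝ)+1) k / (k.factorial : ℝ)) := by
      rw [div_mul_div_comm, div_eq_div_iff (by positivity) (by positivity)]
      linear_combination poch c n * hkey
    simp only [hFdef, hGdef, hHdef, ← hch]
    linear_combination (x ^ n * t ^ k) * hA
  -- per-n sum over k
  have hH : ∀ n : ℕ, HasSum (H n) ((X ^ (2*n+1))⁻¹) := by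
    intro n
    have habs : ‖t‖ < 1 := by rw [Real.norm_eq_abs, abs_of_pos ht0]; exact ht1
    have h := hasSum_choose_mul_geometric_of_norm_lt_one (𝕜 := ℝ) (2*n) habs
    rw [← hXt] at h
    simpa [hHdef, one_div] using h
  have hGH : ∀ n : ℕ, HasSum (fun k => G n * H n k) (G n * (X ^ (2*n+1))⁻¹) :=
    fun n => (hH n).mul_left (G n)
  set w : ℕ → ℝ := fun n => G n * (X ^ (2*n+1))⁻¹ with hwdef
  have hw_eq : ∀ n, w n = X⁻¹ * (poch (1/2) n / poch c n * y ^ n) := by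
    intro n
    have hXne : X ≠ 0 := hX0.ne'
    simp only [hwdef, hGdef, hydef, div_pow, ← pow_mul]
    field_simp
    ring
  have hw : Summable w :=
    ((summable_ratio hc hy0.le hy1).mul_left X⁻¹).congr fun n => (hw_eq n).symm
  have hw0 : ∀ n, 0 ≤ w n := by
    intro n
    rw [hw_eq]
    have := poch_pos one_half_pos n
    have := poch_pos hc n
    positivity
  have hGH0 : ∀ n k, 0 ≤ G n * H n k := by
    intro n k
    rw [← hFGH]
    exact hF0 _
  -- summability of F via ENNReal
  have hEN : (∑' p : ℕ × ℕ, ENNReal.ofReal (F p)) ≠ ⊤ := by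
    have h1 : ∀ n, (∑' k, ENNReal.ofReal (F (k, n))) = ENNReal.ofReal (w n) := by
      intro n
      have : (fun k => ENNReal.ofReal (F (k, n))) = fun k => ENNReal.ofReal (G n * H n k) :=
        funext fun k => by rw [hFGH]
      rw [this, ← ENNReal.ofReal_tsum_of_nonneg (hGH0 n) (hGH n).summable, (hGH n).tsum_eq]
    rw [ENNReal.tsum_prod', ENNReal.tsum_comm]
    rw [tsum_congr h1, ← ENNReal.ofReal_tsum_of_nonneg hw0 hw]
    exact ENNReal.ofReal_ne_top
  have hFs : Summable F :=
    (ENNReal.summable_toReal hEN).congr fun p => ENNReal.toReal_ofReal (hF0 p)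
  have hFk : ∀ k : ℕ, Summable fun n => F (k, n) := fun k => hFs.prod_factor k
  -- part 1
  have part1 : ∀ k : ℕ, Summable fun n : ℕ =>
      poch (((k : ℝ) + 1) / 2) n * poch ((k : ℝ) / 2 + 1) n /
        (poch c n * (n.factorial : ℝ)) * x ^ n := by
    intro k
    have htk : t ^ k ≠ 0 := pow_ne_zero k ht0.ne'
    refine ((hFk k).div_const (t ^ k)).congr fun n => ?_
    simp only [hFdef]
    exact mul_div_cancel_right₀ _ htk
  -- hyp2F1 as tsum of F
  have hyp_eq : ∀ k : ℕ,
      t ^ k * hyp2F1 (((k : ℝ) + 1) / 2) ((k : ℝ) / 2 + 1) c x = ∑' n, F (k, n) := by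
    intro k
    rw [hyp2F1, ← tsum_mul_left]
    exact tsum_congr fun n => by simp only [hFdef]; ring
  have hg : HasSum (fun k => ∑' n, F (k, n)) (∑' p, F p) :=
    hFs.hasSum.prod_fiberwise fun k => (hFk k).hasSum
  have part2 : Summable fun k : ℕ =>
      ((1 - x) / (1 + η)) ^ k * hyp2F1 (((k : ℝ) + 1) / 2) ((k : ℝ) / 2 + 1) c x :=
    hg.summable.congr fun k => (hyp_eq k).symm
  refine ⟨part1, part2, ?_⟩
  -- part 3
  have e1 : (∑' k : ℕ, ((1 - x) / (1 + η)) ^ k *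
      hyp2F1 (((k : ℝ) + 1) / 2) ((k : ℝ) / 2 + 1) c x) = ∑' p, F p := by
    rw [tsum_congr hyp_eq]
    exact hg.tsum_eq
  have hFs' : Summable (Function.uncurry fun k n => F (k, n)) := hFs.congr fun p => rfl
  have e2 : (∑' p, F p) = ∑' (n : ℕ) (k : ℕ), F (k, n) := by
    rw [hFs.tsum_prod, ← Summable.tsum_comm (f := fun k n => F (k, n)) hFs']
  have e3 : (∑' (n : ℕ) (k : ℕ), F (k, n)) = ∑' n, w n := by
    refine tsum_congr fun n => ?_
    rw [tsum_congr fun k => hFGH k n]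
    exact (hGH n).tsum_eq
  have e4 : (∑' n, w n) = (1 + η) / (x + η) * hyp2F1 (1/2) 1 c y := by
    rw [tsum_congr hw_eq, tsum_mul_left, hyp2F1]
    have hXinv : X⁻¹ = (1 + η) / (x + η) := by rw [hXdef, inv_div]
    rw [hXinv]
    congr 1
    refine tsum_congr fun n => ?_
    have hnf : ((n.factorial : ℕ) : ℝ) ≠ 0 := Nat.cast_ne_zero.mpr n.factorial_ne_zero
    have hPc := (poch_pos hc n).ne'
    rw [poch_one]
    field_simp
  rw [e1, e2, e3, e4]
end

section
/- Let $\lambda \in (0,1)$ and let $z$ be a real number with $0 \leq z \leq z_-$ where $z_- := 2/(1+\sqrt{1-\lambda^2})$. Define $H(z) := \frac{z}{1-\lambda^2}\left(1 - \frac{\lambda^2 z}{2} - \frac{\lambda}{2}\sqrt{\lambda^2 z^2 - 4z + 4}\right)$ and $Q := 1 - \lambda^2$. Then $y := Q\, H(z)$ satisfies the functional equation $y = z\left(1 - \lambda\sqrt{1-y}\right)$, and $\lambda^2 z^2 - 4z + 4 \geq 0$ and $0 \leq y \leq 1$ on this range. -/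
/-- The closed-form generating function `H` of the total progeny solves the
functional equation `y = z(1 - λ√(1-y))` with `y = Q H(z)`, `Q = 1 - λ²`. -/
theorem progeny_functional_equation (lam z : ℝ) (hl0 : 0 < lam) (hl1 : lam < 1)
    (hz0 : 0 ≤ z) (hz1 : z ≤ 2 / (1 + Real.sqrt (1 - lam ^ 2))) :
    let H : ℝ := z / (1 - lam ^ 2) *
      (1 - lam ^ 2 * z / 2 - lam / 2 * Real.sqrt (lam ^ 2 * z ^ 2 - 4 * z + 4))
    let Q : ℝ := 1 - lam ^ 2
    let y : ℝ := Q * H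
    0 ≤ lam ^ 2 * z ^ 2 - 4 * z + 4 ∧ 0 ≤ y ∧ y ≤ 1 ∧
      y = z * (1 - lam * Real.sqrt (1 - y)) := by
  intro H Q y
  have hl2 : lam ^ 2 < 1 := by nlinarith
  set s := Real.sqrt (1 - lam ^ 2) with hs_def
  have hs0 : 0 ≤ s := Real.sqrt_nonneg _
  have hs : s ^ 2 = 1 - lam ^ 2 := Real.sq_sqrt (by nlinarith)
  have h1s : (0:ℝ) < 1 + s := by linarith
  have hz1' : z * (1 + s) ≤ 2 := by
    rw [div_eq_mul_inv] at hz1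
    calc z * (1 + s) ≤ 2 * (1 + s)⁻¹ * (1 + s) := by
          apply mul_le_mul_of_nonneg_right hz1 (le_of_lt h1s)
      _ = 2 := by field_simp
  have hD : 0 ≤ lam ^ 2 * z ^ 2 - 4 * z + 4 := by
    nlinarith [mul_nonneg (by nlinarith : (0:ℝ) ≤ 2 - z * (1 + s))
      (by nlinarith [mul_nonneg (mul_nonneg hz0 hs0) hs0] : (0:ℝ) ≤ 2 - z * (1 - s))]
  set d := Real.sqrt (lam ^ 2 * z ^ 2 - 4 * z + 4) with hd_def
  have hd0 : 0 ≤ d := Real.sqrt_nonneg _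
  have hd : d ^ 2 = lam ^ 2 * z ^ 2 - 4 * z + 4 := Real.sq_sqrt hD
  have hQ : (1:ℝ) - lam ^ 2 ≠ 0 := by nlinarith
  have hy : y = z * (1 - lam ^ 2 * z / 2 - lam / 2 * d) := by
    show (1 - lam ^ 2) * (z / (1 - lam ^ 2) * _) = _
    field_simp
    rw [hd_def]; ring_nf
  have hsq : 1 - y = ((lam * z + d) / 2) ^ 2 := by
    rw [hy]; linear_combination (-(1:ℝ)/4) * hd
  have hsqrt : Real.sqrt (1 - y) = (lam * z + d) / 2 := by
    rw [hsq, Real.sqrt_sq (by positivity)]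
  have hy1 : y ≤ 1 := by nlinarith [sq_nonneg ((lam * z + d) / 2)]
  have hy0 : 0 ≤ y := by
    have h2 : 0 ≤ 2 - lam ^ 2 * z := by
      nlinarith [mul_nonneg (mul_nonneg hz0 hs0) hs0]
    have : lam * d ≤ 2 - lam ^ 2 * z := by
      nlinarith [sq_nonneg (lam * d), mul_pos hl0 (lt_of_lt_of_le (by norm_num) (le_refl (2:ℝ)))]
    rw [hy]
    have : 0 ≤ 1 - lam ^ 2 * z / 2 - lam / 2 * d := by linarith
    positivity
  refine ⟨hD, hy0, hy1, ?_⟩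
  rw [hsqrt, hy]; ring
end
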